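/- Let V be a finite type, E ⊆ V × V an edge relation, and w : V × V → ℝ a weight function, and suppose the graph contains no negative-cost cycle. Then for every walk W from s to t there exists an elementary path P from s to t (a walk whose vertices are pairwise distinct) whose cost is less than or equal to the cost of W. -/

import Mathlib

private theorem exists_elementary_aux
    (V : Type*) (E : V → V → Prop) (w : V × V → ℝ)
    (hnoneg : ∀ (k : ℕ) (v : ℕ → V), 1 ≤ k → v k = v 0 →
      (∀ i < k, E (v i) (v (i + 1))) →
      0 ≤ ∑ i ∈ Finset.range k, w (v i, v (i + 1))) :
    ∀ m : ℕ, ∀ u : ℕ → V, (∀ i < m, E (u i) (u (i + 1))) →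
    ∃ (k : ℕ) (v : ℕ → V), v 0 = u 0 ∧ v k = u m ∧
      (∀ i < k, E (v i) (v (i + 1))) ∧
      (∀ i ≤ k, ∀ j ≤ k, i ≠ j → v i ≠ v j) ∧
      ∑ i ∈ Finset.range k, w (v i, v (i + 1)) ≤
        ∑ i ∈ Finset.range m, w (u i, u (i + 1)) := by
  intro m
  induction m using Nat.strong_induction_on with
  | _ m ih =>
  intro u huE
  by_cases hdist : ∀ i ≤ m, ∀ j ≤ m, i ≠ j → u i ≠ u j
  · exact ⟨m, u, rfl, rfl, huE, hdist, le_refl _⟩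
  · push_neg at hdist
    obtain ⟨i, hi, j, hj, hij, heq⟩ := hdist
    have key : ∀ a b : ℕ, 1 ≤ b → a + b ≤ m → u a = u (a + b) →
        ∃ (k : ℕ) (v : ℕ → V), v 0 = u 0 ∧ v k = u m ∧
          (∀ i < k, E (v i) (v (i + 1))) ∧
          (∀ i ≤ k, ∀ j ≤ k, i ≠ j → v i ≠ v j) ∧
          ∑ i ∈ Finset.range k, w (v i, v (i + 1)) ≤
            ∑ i ∈ Finset.range m, w (u i, u (i + 1)) := by
      intro a b hb hab hloop
      set c := m - (a + b) with hc
      have hm : m = a + b + c := by omega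
      set u' : ℕ → V := fun l => if l < a then u l else u (l + b) with hu'
      have h1 : ∀ l, a ≤ l → u' l = u (l + b) := by
        intro l hl; simp [hu', Nat.not_lt.mpr hl]
      have h2 : ∀ l ≤ a, u' l = u l := by
        intro l hl
        rcases lt_or_eq_of_le hl with h | h
        · simp [hu', h]
        · subst h; simp [hu', hloop.symm]
      have hE' : ∀ l < a + c, E (u' l) (u' (l + 1)) := by
        intro l hl
        by_cases h : l < a
        · rw [h2 l (le_of_lt h), h2 (l + 1) h]
          exact huE l (by omega)
        · rw [h1 l (by omega), h1 (l + 1) (by omega)]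
          have : l + 1 + b = l + b + 1 := by omega
          rw [this]
          exact huE (l + b) (by omega)
      -- cost identity
      have hcost : ∑ l ∈ Finset.range (a + c), w (u' l, u' (l + 1)) ≤
          ∑ l ∈ Finset.range m, w (u l, u (l + 1)) := by
        have e1 : ∑ l ∈ Finset.range (a + c), w (u' l, u' (l + 1)) =
            (∑ l ∈ Finset.range a, w (u l, u (l + 1))) +
            ∑ l ∈ Finset.range c, w (u (a + b + l), u (a + b + l + 1)) := by
          rw [Finset.sum_range_add]
          congr 1
          · exact Finset.sum_congr rfl fun l hl => by
              rw [h2 l (le_of_lt (Finset.mem_range.mp hl)),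
                h2 (l + 1) (Finset.mem_range.mp hl)]
          · refine Finset.sum_congr rfl fun l _ => ?_
            rw [h1 (a + l) (by omega), h1 (a + l + 1) (by omega)]
            have e : a + l + b = a + b + l := by omega
            have e' : a + l + 1 + b = a + b + l + 1 := by omega
            rw [e, e']
        have e2 : ∑ l ∈ Finset.range m, w (u l, u (l + 1)) =
            (∑ l ∈ Finset.range a, w (u l, u (l + 1))) +
            (∑ l ∈ Finset.range b, w (u (a + l), u (a + l + 1))) +
            ∑ l ∈ Finset.range c, w (u (a + b + l), u (a + b + l + 1)) := by
          rw [hm, Finset.sum_range_add, Finset.sum_range_add]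
        have hcyc : 0 ≤ ∑ l ∈ Finset.range b, w (u (a + l), u (a + l + 1)) := by
          have := hnoneg b (fun l => u (a + l)) hb (by simp [hloop.symm])
            (fun l hl => by
              have : a + (l + 1) = a + l + 1 := by omega
              simp only [this]
              exact huE (a + l) (by omega))
          simpa [Nat.add_assoc] using this
        rw [e1, e2]; linarith
      obtain ⟨k, v, hv0, hvk, hvE, hvd, hvc⟩ := ih (a + c) (by omega) u' hE'
      refine ⟨k, v, ?_, ?_, hvE, hvd, le_trans hvc hcost⟩
      · rw [hv0, h2 0 (by omega)]
      · rw [hvk, h1 (a + c) (by omega)]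
        congr 1; omega
    rcases lt_or_gt_of_ne hij with h | h
    · exact key i (j - i) (by omega) (by omega) (by
        have : i + (j - i) = j := by omega
        rw [this]; exact heq)
    · exact key j (i - j) (by omega) (by omega) (by
        have : j + (i - j) = i := by omega
        rw [this]; exact heq.symm)

/-- In a weighted directed graph with no negative-cost cycle, every walk from
`s` to `t` can be replaced by an elementary path (a walk with pairwise-distinct
vertices) from `s` to `t` of at most the same cost. -/
theorem exists_elementary_path_cost_le_walk
    (V : Type*) [Fintype V] (E : V → V → Prop) (w : V × V → ℝ)
    (hnoneg : ∀ (k : ℕ) (v : ℕ → V), 1 ≤ k → v k = v 0 →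
      (∀ i < k, E (v i) (v (i + 1))) →
      0 ≤ ∑ i ∈ Finset.range k, w (v i, v (i + 1)))
    (s t : V) (m : ℕ) (u : ℕ → V)
    (hu0 : u 0 = s) (hum : u m = t)
    (huE : ∀ i < m, E (u i) (u (i + 1))) :
    ∃ (k : ℕ) (v : ℕ → V), v 0 = s ∧ v k = t ∧
      (∀ i < k, E (v i) (v (i + 1))) ∧
      (∀ i ≤ k, ∀ j ≤ k, i ≠ j → v i ≠ v j) ∧
      ∑ i ∈ Finset.range k, w (v i, v (i + 1)) ≤
        ∑ i ∈ Finset.range m, w (u i, u (i + 1)) := by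
  obtain ⟨k, v, h0, hk, hE, hd, hc⟩ := exists_elementary_aux V E w hnoneg m u huE
  exact ⟨k, v, hu0 ▸ h0, hum ▸ hk, hE, hd, hc⟩
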